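/- There exists a constant C > 0, depending only on d and γ, with the following property: for all real numbers N_1, N_2 ≥ 1, every k_0 ∈ ℝ^d with |k_0| ≥ 1, every a ∈ ℝ and every M > 0, the set {k_1 ∈ Z_γ^d : |k_1| ≤ 2N_1, |k_1 − k_0| ≤ 2N_2, and |a + 2 k_0·k_1| ≤ M} has at most C · (M/|k_0| + 1) · min(N_1,N_2)^{d−1} elements, where k_0·k_1 denotes the Euclidean inner product. (This lattice-point counting bound is the key step in the proof of the bilinear Strichartz estimate, Lemma 2.2 (i).) -/

import Mathlib

noncomputable section

/-- Embedding of the index lattice into `ℝ^d`: `m ↦ (m_j / γ_j)_j`,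
so that its range is `Z_γ^d`. -/
def latt {d : ℕ} (γ : Fin d → ℝ) (m : Fin d → ℤ) : EuclideanSpace ℝ (Fin d) :=
  WithLp.toLp 2 (fun j => (m j : ℝ) / γ j)

open Finset

lemma abs_apply_le_norm {d : ℕ} (x : EuclideanSpace ℝ (Fin d)) (i : Fin d) :
    |x i| ≤ ‖x‖ := by
  rw [EuclideanSpace.norm_eq]
  calc |x i| = Real.sqrt (‖x i‖ ^ 2) := by
        rw [Real.sqrt_sq_eq_abs, Real.norm_eq_abs, abs_abs]
    _ ≤ _ := Real.sqrt_le_sqrt (Finset.single_le_sum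
        (fun i _ => sq_nonneg ‖x i‖) (mem_univ i))

lemma int_card_le (lo hi : ℝ) (h : lo ≤ hi) :
    ((Finset.Icc ⌈lo⌉ ⌊hi⌋).card : ℝ) ≤ hi - lo + 1 := by
  rw [Int.card_Icc]
  rcases le_or_gt ⌈lo⌉ (⌊hi⌋ + 1) with h' | h'
  · have h0 : ((⌊hi⌋ + 1 - ⌈lo⌉).toNat : ℝ) = ((⌊hi⌋ : ℝ) + 1 - ⌈lo⌉) := by
      have := Int.toNat_of_nonneg (show (0:ℤ) ≤ ⌊hi⌋ + 1 - ⌈lo⌉ by omega)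
      exact_mod_cast congrArg (Int.cast : ℤ → ℝ) this
    rw [h0]
    have := Int.floor_le hi
    have := Int.le_ceil lo
    linarith
  · have h0 : (⌊hi⌋ + 1 - ⌈lo⌉).toNat = 0 := by omega
    rw [h0]
    push_cast
    linarith

set_option maxHeartbeats 1000000 in
/-- Lattice-point counting bound: the key step in the proof of the bilinear
Strichartz estimate, Lemma 2.2 (i). -/
theorem lattice_count_key_step
    (d : ℕ) (hd : 2 ≤ d) (γ : Fin d → ℝ) (hγ : ∀ j, 0 < γ j) :
    ∃ C : ℝ, 0 < C ∧
      ∀ N₁ N₂ : ℝ, 1 ≤ N₁ → 1 ≤ N₂ →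
      ∀ k₀ : EuclideanSpace ℝ (Fin d), 1 ≤ ‖k₀‖ →
      ∀ a M : ℝ, 0 < M →
        {m : Fin d → ℤ | ‖latt γ m‖ ≤ 2 * N₁ ∧ ‖latt γ m - k₀‖ ≤ 2 * N₂ ∧
            |a + 2 * (inner ℝ k₀ (latt γ m) : ℝ)| ≤ M}.Finite ∧
        (({m : Fin d → ℤ | ‖latt γ m‖ ≤ 2 * N₁ ∧ ‖latt γ m - k₀‖ ≤ 2 * N₂ ∧
            |a + 2 * (inner ℝ k₀ (latt γ m) : ℝ)| ≤ M}.ncard : ℝ) ≤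
          C * (M / ‖k₀‖ + 1) * (min N₁ N₂) ^ ((d : ℝ) - 1)) := by
  classical
  have hd0 : 0 < d := by omega
  set G := ∑ i, γ i with hG
  set P := ∏ i, (4 * γ i + 1) with hP
  have hG0 : 0 < G := Finset.sum_pos (fun i _ => hγ i) ⟨⟨0, hd0⟩, mem_univ _⟩
  have hP1 : (1:ℝ) ≤ P := by
    rw [hP]
    calc (1:ℝ) = ∏ _i : Fin d, (1:ℝ) := by simp
      _ ≤ ∏ i, (4 * γ i + 1) :=
        Finset.prod_le_prod (fun i _ => zero_le_one) (fun i _ => by nlinarith [(hγ i).le])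
  have hsd : 0 ≤ Real.sqrt d := Real.sqrt_nonneg _
  refine ⟨(Real.sqrt d * G + 1) * P, by positivity, ?_⟩
  intro N₁ N₂ hN1 hN2 k₀ hk₀ a M hM
  set S := {m : Fin d → ℤ | ‖latt γ m‖ ≤ 2 * N₁ ∧ ‖latt γ m - k₀‖ ≤ 2 * N₂ ∧
      |a + 2 * (inner ℝ k₀ (latt γ m) : ℝ)| ≤ M} with hS
  set N := min N₁ N₂ with hN
  have hN1' : (1:ℝ) ≤ N := le_min hN1 hN2
  have hkn : (0:ℝ) < ‖k₀‖ := lt_of_lt_of_le one_pos hk₀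
  -- unpack membership
  have key : ∀ m ∈ S, (∀ i, |(m i : ℝ)| ≤ 2 * γ i * N₁) ∧
      (∀ i, |(m i : ℝ) - γ i * k₀ i| ≤ 2 * γ i * N₂) ∧
      |a + 2 * ∑ i, k₀ i * ((m i : ℝ) / γ i)| ≤ M := by
    intro m hm
    rw [hS, Set.mem_setOf_eq] at hm
    obtain ⟨h1, h2, h3⟩ := hm
    refine ⟨fun i => ?_, fun i => ?_, ?_⟩
    · have h := (abs_apply_le_norm (latt γ m) i).trans h1
      simp only [latt, PiLp.toLp_apply] at h
      rw [abs_div, abs_of_pos (hγ i), div_le_iff₀ (hγ i)] at h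
      nlinarith
    · have h := (abs_apply_le_norm (latt γ m - k₀) i).trans h2
      have he : (latt γ m - k₀) i = (m i : ℝ) / γ i - k₀ i := by simp [latt]
      rw [he] at h
      have heq : |(m i : ℝ) - γ i * k₀ i| = γ i * |(m i : ℝ) / γ i - k₀ i| := by
        have he2 : (m i : ℝ) - γ i * k₀ i = γ i * ((m i : ℝ) / γ i - k₀ i) := by
          rw [mul_sub, mul_div_cancel₀ _ (hγ i).ne']
        rw [he2, abs_mul, abs_of_pos (hγ i)]
      rw [heq]
      calc γ i * |(m i : ℝ) / γ i - k₀ i| ≤ γ i * (2 * N₂) :=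
            mul_le_mul_of_nonneg_left h (hγ i).le
        _ = 2 * γ i * N₂ := by ring
    · have he : (inner ℝ k₀ (latt γ m) : ℝ) = ∑ i, k₀ i * ((m i : ℝ) / γ i) := by
        simp [PiLp.inner_apply, RCLike.inner_apply, latt, mul_comm]
      rwa [he] at h3
  -- finiteness
  have hfin : S.Finite := by
    apply Set.Finite.subset
      (Set.Finite.pi (t := fun i => Set.Icc (-⌈2 * γ i * N₁⌉) ⌈2 * γ i * N₁⌉)
        (fun i => Set.finite_Icc _ _))
    intro m hm
    have h1 := (key m hm).1
    simp only [Set.mem_pi, Set.mem_univ, forall_true_left, Set.mem_Icc]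
    intro i
    have h := h1 i
    rw [abs_le] at h
    have hc := Int.le_ceil (2 * γ i * N₁)
    constructor
    · have : ((-⌈2 * γ i * N₁⌉ : ℤ) : ℝ) ≤ (m i : ℝ) := by push_cast; linarith [h.1]
      exact_mod_cast this
    · have : ((m i : ℝ)) ≤ ((⌈2 * γ i * N₁⌉ : ℤ) : ℝ) := by linarith [h.2]
      exact_mod_cast this
  refine ⟨hfin, ?_⟩
  -- maximal coordinate of k₀
  obtain ⟨j, -, hj⟩ := Finset.exists_max_image Finset.univ (fun i => |k₀ i|)
    ⟨⟨0, hd0⟩, mem_univ _⟩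
  have hnorm_le : ‖k₀‖ ≤ Real.sqrt d * |k₀ j| := by
    rw [EuclideanSpace.norm_eq]
    have hsum : ∑ i, ‖k₀ i‖ ^ 2 ≤ (d:ℝ) * |k₀ j| ^ 2 := by
      calc ∑ i, ‖k₀ i‖ ^ 2 ≤ ∑ _i : Fin d, |k₀ j| ^ 2 :=
            Finset.sum_le_sum fun i _ => by
              rw [Real.norm_eq_abs]
              exact pow_le_pow_left₀ (abs_nonneg _) (hj i (mem_univ i)) 2
        _ = (d:ℝ) * |k₀ j| ^ 2 := by
            simp [Finset.sum_const, Finset.card_univ, nsmul_eq_mul]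
    calc Real.sqrt (∑ i, ‖k₀ i‖ ^ 2) ≤ Real.sqrt ((d:ℝ) * |k₀ j| ^ 2) :=
          Real.sqrt_le_sqrt hsum
      _ = Real.sqrt d * |k₀ j| := by
          rw [Real.sqrt_mul (Nat.cast_nonneg d), Real.sqrt_sq_eq_abs, abs_abs]
  have hkj : 0 < |k₀ j| := by
    by_contra hc
    push_neg at hc
    have h0 : |k₀ j| = 0 := le_antisymm hc (abs_nonneg _)
    rw [h0, mul_zero] at hnorm_le
    linarith
  have hγj := hγ j
  have hγjG : γ j ≤ G := Finset.single_le_sum (fun i _ => (hγ i).le) (mem_univ j)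
  -- coordinate intervals
  obtain ⟨lo, hi, hmemI, hlenI⟩ :
      ∃ lo hi : Fin d → ℤ,
        (∀ m ∈ S, ∀ i, m i ∈ Finset.Icc (lo i) (hi i)) ∧
        (∀ i, ((Finset.Icc (lo i) (hi i)).card : ℝ) ≤ (4 * γ i + 1) * N) := by
    rcases min_cases N₁ N₂ with ⟨hNe, hle⟩ | ⟨hNe, hle⟩
    · refine ⟨fun i => ⌈-(2 * γ i * N₁)⌉, fun i => ⌊2 * γ i * N₁⌋, ?_, ?_⟩
      · intro m hm i
        have h := (key m hm).1 i
        rw [abs_le] at h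
        exact Finset.mem_Icc.mpr ⟨Int.ceil_le.mpr (by exact_mod_cast h.1),
          Int.le_floor.mpr (by exact_mod_cast h.2)⟩
      · intro i
        have hNN : N = N₁ := hN.trans hNe
        have hpos : (0:ℝ) ≤ 2 * γ i * N₁ := by nlinarith [(hγ i).le]
        calc ((Finset.Icc ⌈-(2 * γ i * N₁)⌉ ⌊2 * γ i * N₁⌋).card : ℝ)
            ≤ 2 * γ i * N₁ - (-(2 * γ i * N₁)) + 1 := int_card_le _ _ (by linarith)
          _ = 4 * γ i * N₁ + 1 := by ring
          _ ≤ (4 * γ i + 1) * N := by rw [hNN]; nlinarith [(hγ i).le]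
    · refine ⟨fun i => ⌈γ i * k₀ i - 2 * γ i * N₂⌉,
        fun i => ⌊γ i * k₀ i + 2 * γ i * N₂⌋, ?_, ?_⟩
      · intro m hm i
        have h := (key m hm).2.1 i
        rw [abs_le] at h
        refine Finset.mem_Icc.mpr ⟨Int.ceil_le.mpr ?_, Int.le_floor.mpr ?_⟩ <;>
          push_cast <;> linarith [h.1, h.2]
      · intro i
        have hNN : N = N₂ := hN.trans hNe
        have hpos : (0:ℝ) ≤ 2 * γ i * N₂ := by nlinarith [(hγ i).le]
        calc ((Finset.Icc ⌈γ i * k₀ i - 2 * γ i * N₂⌉ ⌊γ i * k₀ i + 2 * γ i * N₂⌋).card : ℝ)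
            ≤ (γ i * k₀ i + 2 * γ i * N₂) - (γ i * k₀ i - 2 * γ i * N₂) + 1 :=
              int_card_le _ _ (by linarith)
          _ = 4 * γ i * N₂ + 1 := by ring
          _ ≤ (4 * γ i + 1) * N := by rw [hNN]; nlinarith [(hγ i).le]
  -- the projection map and its fibers
  set f : (Fin d → ℤ) → (Fin d → ℤ) := fun m => Function.update m j 0 with hf
  set s := hfin.toFinset with hs
  have hmem_s : ∀ m, m ∈ s ↔ m ∈ S := fun m => hfin.mem_toFinset
  -- image bound
  have himg : ((s.image f).card : ℝ) ≤ P * N ^ (d - 1 : ℕ) := by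
    have hsub : s.image f ⊆ Finset.Icc (Function.update lo j 0) (Function.update hi j 0) := by
      intro r hr
      obtain ⟨m, hm, rfl⟩ := Finset.mem_image.mp hr
      have hmS : m ∈ S := (hmem_s m).mp hm
      rw [Finset.mem_Icc]
      constructor <;> rw [Pi.le_def] <;> intro i <;> by_cases hij : i = j
      · subst hij; simp [hf]
      · simp only [hf, Function.update_of_ne hij]
        exact (Finset.mem_Icc.mp (hmemI m hmS i)).1
      · subst hij; simp [hf]
      · simp only [hf, Function.update_of_ne hij]
        exact (Finset.mem_Icc.mp (hmemI m hmS i)).2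
    calc ((s.image f).card : ℝ)
        ≤ ((Finset.Icc (Function.update lo j 0) (Function.update hi j 0)).card : ℝ) := by
          exact_mod_cast Finset.card_le_card hsub
      _ = ∏ i, ((Finset.Icc (Function.update lo j 0 i) (Function.update hi j 0 i)).card : ℝ) := by
          rw [Pi.card_Icc]; push_cast; rfl
      _ = ∏ i ∈ univ.erase j, ((Finset.Icc (lo i) (hi i)).card : ℝ) := by
          rw [← Finset.mul_prod_erase univ _ (mem_univ j)]
          simp only [Function.update_self]
          rw [show ((Finset.Icc (0:ℤ) 0).card : ℝ) = 1 by simp, one_mul]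
          exact Finset.prod_congr rfl fun i hi' => by
            rw [Function.update_of_ne (Finset.ne_of_mem_erase hi'),
              Function.update_of_ne (Finset.ne_of_mem_erase hi')]
      _ ≤ ∏ i ∈ univ.erase j, ((4 * γ i + 1) * N) :=
          Finset.prod_le_prod (fun i _ => by positivity) (fun i _ => hlenI i)
      _ = (∏ i ∈ univ.erase j, (4 * γ i + 1)) * N ^ (d - 1 : ℕ) := by
          rw [Finset.prod_mul_distrib, Finset.prod_const,
            Finset.card_erase_of_mem (mem_univ j), Finset.card_univ, Fintype.card_fin]
      _ ≤ P * N ^ (d - 1 : ℕ) := by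
          apply mul_le_mul_of_nonneg_right _ (by positivity)
          have hpos : (0:ℝ) ≤ ∏ i ∈ univ.erase j, (4 * γ i + 1) :=
            Finset.prod_nonneg fun i _ => by nlinarith [(hγ i).le]
          rw [hP, ← Finset.mul_prod_erase univ _ (mem_univ j)]
          nlinarith [(hγ j).le]
  -- fiber bound
  set B := Real.sqrt d * G * (M / ‖k₀‖) + 1 with hB
  have hB0 : 0 ≤ B := by positivity
  have hfiber : ∀ r ∈ s.image f, (s.filter (fun m => f m = r)).card ≤ ⌊B⌋₊ := by
    intro r hr
    apply Nat.le_floor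
    set b := 2 * k₀ j / γ j with hb
    have hbabs : |b| = 2 * |k₀ j| / γ j := by
      rw [hb, abs_div, abs_of_pos hγj, abs_mul]
      norm_num
    have hbpos : 0 < |b| := by rw [hbabs]; positivity
    have hbne : b ≠ 0 := abs_pos.mp hbpos
    set c := (-a - 2 * ∑ i ∈ univ.erase j, k₀ i * ((r i : ℝ) / γ i)) / b with hc
    set t := M / |b| with ht
    have ht0 : 0 ≤ t := by rw [ht]; exact div_nonneg hM.le (abs_nonneg b)
    have hmap : ∀ m ∈ s.filter (fun m => f m = r), m j ∈ Finset.Icc ⌈c - t⌉ ⌊c + t⌋ := by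
      intro m hm
      rw [Finset.mem_filter] at hm
      obtain ⟨hms, hfm⟩ := hm
      have hmS : m ∈ S := (hmem_s m).mp hms
      have h3 := (key m hmS).2.2
      have hri : ∀ i, i ≠ j → (m i : ℝ) = (r i : ℝ) := by
        intro i hij
        have : m i = r i := by
          rw [← hfm]
          simp [hf, Function.update_of_ne hij]
        exact_mod_cast congrArg (Int.cast : ℤ → ℝ) this
      have hsplit : ∑ i, k₀ i * ((m i : ℝ) / γ i)
          = k₀ j * ((m j : ℝ) / γ j) + ∑ i ∈ univ.erase j, k₀ i * ((r i : ℝ) / γ i) := by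
        rw [← Finset.add_sum_erase univ _ (mem_univ j)]
        congr 1
        exact Finset.sum_congr rfl fun i hi' => by
          rw [hri i (Finset.ne_of_mem_erase hi')]
      rw [hsplit] at h3
      have hcb : c * b = -a - 2 * ∑ i ∈ univ.erase j, k₀ i * ((r i : ℝ) / γ i) :=
        div_mul_cancel₀ _ hbne
      have hexp : b * (m j : ℝ) - c * b
          = a + 2 * (k₀ j * ((m j : ℝ) / γ j) + ∑ i ∈ univ.erase j, k₀ i * ((r i : ℝ) / γ i)) := by
        rw [hcb, hb]
        ring
      have hbm : |b * (m j : ℝ) - c * b| ≤ M := by rw [hexp]; exact h3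
      have habs : |(m j : ℝ) - c| ≤ t := by
        rw [ht, le_div_iff₀ hbpos, ← abs_mul]
        have he : ((m j : ℝ) - c) * b = b * (m j : ℝ) - c * b := by ring
        rw [he]
        exact hbm
      rw [abs_le] at habs
      exact Finset.mem_Icc.mpr ⟨Int.ceil_le.mpr (by linarith [habs.1]),
        Int.le_floor.mpr (by linarith [habs.2])⟩
    have hinj : Set.InjOn (fun m : Fin d → ℤ => m j)
        ((s.filter (fun m => f m = r) : Finset (Fin d → ℤ)) : Set (Fin d → ℤ)) := by
      intro m hm m' hm' hmm
      simp only [Finset.coe_filter, Set.mem_setOf_eq] at hm hm'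
      funext i
      by_cases hij : i = j
      · subst hij; exact hmm
      · calc m i = r i := by rw [← hm.2]; simp [hf, Function.update_of_ne hij]
          _ = m' i := by rw [← hm'.2]; simp [hf, Function.update_of_ne hij]
    have hcard := Finset.card_le_card_of_injOn (fun m : Fin d → ℤ => m j) hmap hinj
    calc (((s.filter (fun m => f m = r)).card : ℕ) : ℝ)
        ≤ ((Finset.Icc ⌈c - t⌉ ⌊c + t⌋).card : ℝ) := by exact_mod_cast hcard
      _ ≤ (c + t) - (c - t) + 1 := int_card_le _ _ (by linarith)
      _ = 2 * t + 1 := by ring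
      _ ≤ B := by
        rw [ht, hbabs, hB]
        have h1 : 2 * (M / (2 * |k₀ j| / γ j)) = M * γ j / |k₀ j| := by
          field_simp
        rw [h1]
        have hq0 : (0:ℝ) ≤ M / ‖k₀‖ := by positivity
        have h3 : G * (M / ‖k₀‖) * ‖k₀‖ ≤ G * (M / ‖k₀‖) * (Real.sqrt d * |k₀ j|) :=
          mul_le_mul_of_nonneg_left hnorm_le (by positivity)
        have h4 : G * (M / ‖k₀‖) * ‖k₀‖ = G * M := by field_simp
        have h2 : M * γ j / |k₀ j| ≤ Real.sqrt d * G * (M / ‖k₀‖) := by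
          rw [div_le_iff₀ hkj]
          nlinarith [hM.le]
        linarith
  -- put everything together
  have htot := Finset.card_le_mul_card_image s ⌊B⌋₊ hfiber
  rw [Set.ncard_eq_toFinset_card S hfin, ← hs]
  rw [show ((d:ℝ) - 1) = ((d - 1 : ℕ) : ℝ) by
    push_cast [Nat.cast_sub (by omega : 1 ≤ d)]; ring, Real.rpow_natCast]
  calc (s.card : ℝ) ≤ (⌊B⌋₊ : ℝ) * ((s.image f).card : ℝ) := by exact_mod_cast htot
    _ ≤ B * (P * N ^ (d - 1 : ℕ)) :=
        mul_le_mul (Nat.floor_le hB0) himg (by positivity) hB0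
    _ ≤ ((Real.sqrt d * G + 1) * (M / ‖k₀‖ + 1)) * (P * N ^ (d - 1 : ℕ)) := by
        apply mul_le_mul_of_nonneg_right _ (by positivity)
        rw [hB]
        have hq0 : (0:ℝ) ≤ M / ‖k₀‖ := by positivity
        nlinarith [mul_nonneg hsd hG0.le]
    _ = (Real.sqrt d * G + 1) * P * (M / ‖k₀‖ + 1) * N ^ (d - 1 : ℕ) := by ring
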